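/- There exists a word φ over the alphabet 𝒜 that is a ZF sentence, has length |φ| = 494 and contains exactly one occurrence of the symbol ¬, such that for every digraph D = (V, E): D ⊨ φ if and only if D is Cantor, i.e., for no u, v ∈ V does SUR(v; u) hold. -/

import Mathlib

/-- The alphabet `𝒜`: countably many variable symbols `x_i` together with the
eleven symbols `∈, =, ¬, →, ↔, ∧, ∨, ∃, ∀, (, )`. -/
inductive ZSym : Type
  | var : ℕ → ZSym   -- the variable `x_i`
  | mem : ZSym       -- `∈`
  | eq : ZSym        -- `=`
  | neg : ZSym       -- `¬`
  | imp : ZSym       -- `→`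
  | iff : ZSym       -- `↔`
  | and : ZSym       -- `∧`
  | or : ZSym        -- `∨`
  | ex : ZSym        -- `∃`
  | all : ZSym       -- `∀`
  | lp : ZSym        -- `(`
  | rp : ZSym        -- `)`
  deriving DecidableEq

/-- A word over `𝒜` is a finite sequence of symbols. -/
abbrev ZWord : Type := List ZSym

/-- The atomic ZF formula `(x_i ∈ x_j)`. -/
def memAtom (i j : ℕ) : ZWord := [ZSym.lp, ZSym.var i, ZSym.mem, ZSym.var j, ZSym.rp]

/-- The atomic ZF formula `(x_i = x_j)`. -/
def eqAtom (i j : ℕ) : ZWord := [ZSym.lp, ZSym.var i, ZSym.eq, ZSym.var j, ZSym.rp]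

/-- `u` is an atomic ZF formula: `(x_i ∈ x_j)` or `(x_i = x_j)`. -/
def IsAtomicZF (u : ZWord) : Prop := ∃ i j : ℕ, u = memAtom i j ∨ u = eqAtom i j

/-- The word `¬v`. -/
def negW (v : ZWord) : ZWord := ZSym.neg :: v
/-- The word `(v → w)`. -/
def impW (v w : ZWord) : ZWord := [ZSym.lp] ++ v ++ [ZSym.imp] ++ w ++ [ZSym.rp]
/-- The word `(v ↔ w)`. -/
def iffW (v w : ZWord) : ZWord := [ZSym.lp] ++ v ++ [ZSym.iff] ++ w ++ [ZSym.rp]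
/-- The word `(v ∧ w)`. -/
def andW (v w : ZWord) : ZWord := [ZSym.lp] ++ v ++ [ZSym.and] ++ w ++ [ZSym.rp]
/-- The word `(v ∨ w)`. -/
def orW (v w : ZWord) : ZWord := [ZSym.lp] ++ v ++ [ZSym.or] ++ w ++ [ZSym.rp]
/-- The word `(∃x_k v)`. -/
def exW (k : ℕ) (v : ZWord) : ZWord := [ZSym.lp, ZSym.ex, ZSym.var k] ++ v ++ [ZSym.rp]
/-- The word `(∀x_k v)`. -/
def allW (k : ℕ) (v : ZWord) : ZWord := [ZSym.lp, ZSym.all, ZSym.var k] ++ v ++ [ZSym.rp]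

/-- `s : Fin n → ZWord` is a generating sequence: every entry is an atomic ZF
formula or is built from earlier entries by one of the seven formation rules. -/
def IsGenSeq {n : ℕ} (s : Fin n → ZWord) : Prop :=
  ∀ i : Fin n, IsAtomicZF (s i) ∨
    (∃ j : Fin n, j < i ∧ s i = negW (s j)) ∨
    (∃ j j' : Fin n, j < i ∧ j' < i ∧ s i = impW (s j) (s j')) ∨
    (∃ j j' : Fin n, j < i ∧ j' < i ∧ s i = iffW (s j) (s j')) ∨
    (∃ j j' : Fin n, j < i ∧ j' < i ∧ s i = andW (s j) (s j')) ∨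
    (∃ j j' : Fin n, j < i ∧ j' < i ∧ s i = orW (s j) (s j')) ∨
    (∃ j : Fin n, ∃ k : ℕ, j < i ∧ s i = exW k (s j)) ∨
    (∃ j : Fin n, ∃ k : ℕ, j < i ∧ s i = allW k (s j))

/-- `u` is a ZF formula: it is the last entry of some generating sequence. -/
def IsZF (u : ZWord) : Prop :=
  ∃ n : ℕ, ∃ s : Fin (n + 1) → ZWord, IsGenSeq s ∧ s (Fin.last n) = u

/-- The set of in-neighbors (`D`-elements) of `u` in the digraph with arrow relation `E`. -/
def inNbrs {V : Type*} (E : V → V → Prop) (u : V) : Set V := {v | E v u}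

/-- `SIN E u v`: `u` is the unique vertex whose set of in-neighbors is `{v}`. -/
def SIN {V : Type*} (E : V → V → Prop) (u v : V) : Prop :=
  inNbrs E u = {v} ∧ ∀ w, inNbrs E w = {v} → w = u

/-- `DOU E u v w`: `u` is the unique vertex whose set of in-neighbors is `{v, w}`. -/
def DOU {V : Type*} (E : V → V → Prop) (u v w : V) : Prop :=
  inNbrs E u = {v, w} ∧ ∀ t, inNbrs E t = {v, w} → t = u

/-- `OPA E u v w`: `u` is an ordered pair `⟨v, w⟩_D`. -/
def OPA {V : Type*} (E : V → V → Prop) (u v w : V) : Prop :=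
  ∃ d e, SIN E d v ∧ DOU E e v w ∧ DOU E u d e

/-- `REL E u v`: `u` is a `D`-relation from `v` to `P(v)`. -/
def REL {V : Type*} (E : V → V → Prop) (u v : V) : Prop :=
  ∀ w ∈ inNbrs E u, ∃ w₁ ∈ inNbrs E v, ∃ w₂,
    inNbrs E w₂ ⊆ inNbrs E v ∧ OPA E w w₁ w₂

/-- `FUN E u v`: `u` is a `D`-function from `v` to `P(v)`. -/
def FUN {V : Type*} (E : V → V → Prop) (u v : V) : Prop :=
  REL E u v ∧ ∀ w ∈ inNbrs E v, ∃! p, p ∈ inNbrs E u ∧ ∃ w', OPA E p w w'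

/-- `SUR E u v`: `u` is a `D`-surjection from `v` to `P(v)`. -/
def SUR {V : Type*} (E : V → V → Prop) (u v : V) : Prop :=
  FUN E u v ∧ ∀ w', inNbrs E w' ⊆ inNbrs E v →
    ∃ p ∈ inNbrs E u, ∃ w, OPA E p w w'

/-- The occurrence at (0-indexed) position `p` in the word `u` is a bound
occurrence of the variable `x_i`: it lies in a contiguous subword of `u` that is
a ZF formula of the form `(∃x_i v)` or `(∀x_i v)`. -/
def BoundOcc (u : ZWord) (p i : ℕ) : Prop :=
  ∃ a b : ℕ, a ≤ p ∧ p < a + b ∧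
    ∃ v : ZWord, IsZF v ∧
      ((u.drop a).take b = exW i v ∨ (u.drop a).take b = allW i v)

/-- `u` is a ZF sentence: a ZF formula with no free occurrence of any variable. -/
def IsSentenceZF (u : ZWord) : Prop :=
  IsZF u ∧ ∀ p i : ℕ, u[p]? = some (ZSym.var i) → BoundOcc u p i

/-- `S` is an adequate (Tarskian) satisfaction relation for the digraph `(V, E)`:
`S u f` plays the role of `D ⊨_f u` and satisfies the standard recursive clauses
on all ZF formulas; realizations are maps `f : ℕ → V`, with `f i` the value of
the variable `x_i`. -/
def Adequate {V : Type*} (E : V → V → Prop) (S : ZWord → (ℕ → V) → Prop) : Prop :=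
  (∀ (i j : ℕ) (f : ℕ → V), S (memAtom i j) f ↔ E (f i) (f j)) ∧
  (∀ (i j : ℕ) (f : ℕ → V), S (eqAtom i j) f ↔ f i = f j) ∧
  (∀ v : ZWord, IsZF v → ∀ f : ℕ → V, S (negW v) f ↔ ¬ S v f) ∧
  (∀ v w : ZWord, IsZF v → IsZF w → ∀ f : ℕ → V, S (impW v w) f ↔ (S v f → S w f)) ∧
  (∀ v w : ZWord, IsZF v → IsZF w → ∀ f : ℕ → V, S (iffW v w) f ↔ (S v f ↔ S w f)) ∧
  (∀ v w : ZWord, IsZF v → IsZF w → ∀ f : ℕ → V, S (andW v w) f ↔ (S v f ∧ S w f)) ∧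
  (∀ v w : ZWord, IsZF v → IsZF w → ∀ f : ℕ → V, S (orW v w) f ↔ (S v f ∨ S w f)) ∧
  (∀ (v : ZWord) (k : ℕ), IsZF v → ∀ f : ℕ → V,
    S (exW k v) f ↔ ∃ a : V, S v (Function.update f k a)) ∧
  (∀ (v : ZWord) (k : ℕ), IsZF v → ∀ f : ℕ → V,
    S (allW k v) f ↔ ∀ a : V, S v (Function.update f k a))

namespace CantorAux

/-- Deep-embedded ZF formulas. -/
inductive Fm : Type
  | mem (i j : ℕ) : Fm
  | eq (i j : ℕ) : Fm
  | neg (v : Fm) : Fm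
  | imp (v w : Fm) : Fm
  | iff (v w : Fm) : Fm
  | and (v w : Fm) : Fm
  | or (v w : Fm) : Fm
  | ex (k : ℕ) (v : Fm) : Fm
  | all (k : ℕ) (v : Fm) : Fm

/-- The word of a formula. -/
def Fm.toW : Fm → ZWord
  | .mem i j => memAtom i j
  | .eq i j => eqAtom i j
  | .neg v => negW v.toW
  | .imp v w => impW v.toW w.toW
  | .iff v w => iffW v.toW w.toW
  | .and v w => andW v.toW w.toW
  | .or v w => orW v.toW w.toW
  | .ex k v => exW k v.toW
  | .all k v => allW k v.toW

/-- Tarskian evaluation. -/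
def Fm.Ev {V : Type*} (E : V → V → Prop) : Fm → (ℕ → V) → Prop
  | .mem i j, f => E (f i) (f j)
  | .eq i j, f => f i = f j
  | .neg v, f => ¬ v.Ev E f
  | .imp v w, f => v.Ev E f → w.Ev E f
  | .iff v w, f => v.Ev E f ↔ w.Ev E f
  | .and v w, f => v.Ev E f ∧ w.Ev E f
  | .or v w, f => v.Ev E f ∨ w.Ev E f
  | .ex k v, f => ∃ a, v.Ev E (Function.update f k a)
  | .all k v, f => ∀ a, v.Ev E (Function.update f k a)

/-! ### `IsZF` for words of formulas -/

def Step (prev : List ZWord) (w : ZWord) : Prop :=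
  IsAtomicZF w ∨ (∃ v ∈ prev, w = negW v) ∨
    (∃ v ∈ prev, ∃ v' ∈ prev,
      w = impW v v' ∨ w = iffW v v' ∨ w = andW v v' ∨ w = orW v v') ∨
    (∃ v ∈ prev, ∃ k : ℕ, w = exW k v ∨ w = allW k v)

theorem Step.mono {p q : List ZWord} (h : p ⊆ q) {w : ZWord} (hs : Step p w) :
    Step q w := by
  rcases hs with h1 | ⟨v, hv, h2⟩ | ⟨v, hv, v', hv', h3⟩ | ⟨v, hv, k, h4⟩
  · exact Or.inl h1
  · exact Or.inr (Or.inl ⟨v, h hv, h2⟩)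
  · exact Or.inr (Or.inr (Or.inl ⟨v, h hv, v', h hv', h3⟩))
  · exact Or.inr (Or.inr (Or.inr ⟨v, h hv, k, h4⟩))

def GoodL (l : List ZWord) : Prop :=
  ∀ i (h : i < l.length), Step (l.take i) l[i]

theorem GoodL.append {l₁ l₂ : List ZWord} (h1 : GoodL l₁) (h2 : GoodL l₂) :
    GoodL (l₁ ++ l₂) := by
  intro i h
  rcases lt_or_ge i l₁.length with hi | hi
  · rw [List.getElem_append_left hi]
    refine (h1 i hi).mono ?_
    rw [List.take_append, Nat.sub_eq_zero_of_le hi.le, List.take_zero,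
      List.append_nil]
    exact List.Subset.refl _
  · rw [List.getElem_append_right hi]
    refine ((h2 _ (by simp at h ⊢; omega)).mono ?_)
    rw [List.take_append, List.take_of_length_le hi]
    exact List.subset_append_right _ _

theorem GoodL.concat {l : List ZWord} (h1 : GoodL l) {w : ZWord} (h2 : Step l w) :
    GoodL (l ++ [w]) := by
  intro i h
  simp only [List.length_append, List.length_singleton] at h
  rcases lt_or_ge i l.length with hi | hi
  · rw [List.getElem_append_left hi]
    refine (h1 i hi).mono ?_
    rw [List.take_append, Nat.sub_eq_zero_of_le hi.le, List.take_zero,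
      List.append_nil]
    exact List.Subset.refl _
  · have : i = l.length := by omega
    subst this
    rw [List.getElem_append_right (le_refl _)]
    simp only [Nat.sub_self, List.getElem_singleton]
    refine h2.mono ?_
    rw [List.take_append, Nat.sub_self, List.take_zero, List.append_nil,
      List.take_of_length_le (le_refl _)]
    exact List.Subset.refl _

/-- `u` is a ZF formula, list version. -/
def IsZF' (u : ZWord) : Prop := ∃ l : List ZWord, GoodL (l ++ [u])

theorem IsZF'.isZF {u : ZWord} (h : IsZF' u) : IsZF u := by
  obtain ⟨l, hl⟩ := h
  set L := l ++ [u] with hL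
  have hlen : L.length = l.length + 1 := by simp [hL]
  set s : Fin (l.length + 1) → ZWord := fun t => L.getD t.val default with hs
  have hsval : ∀ t : Fin (l.length + 1), s t = L[t.val]'(by omega) := by
    intro t
    exact List.getD_eq_getElem L default (by omega)
  have key : ∀ (i : Fin (l.length + 1)) (v : ZWord), v ∈ L.take i.val →
      ∃ j : Fin (l.length + 1), j < i ∧ s j = v := by
    intro i v hv
    obtain ⟨j, hj, hjv⟩ := List.getElem_of_mem hv
    have hj1 : j < i.val := by simp at hj; omega
    refine ⟨⟨j, by omega⟩, ?_, ?_⟩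
    · simpa [Fin.lt_def] using hj1
    · rw [hsval, ← hjv, List.getElem_take]
  refine ⟨l.length, s, fun i => ?_, ?_⟩
  · have hs' := hl i.val (by omega)
    rw [← hsval i] at hs'
    rcases hs' with h1 | ⟨v, hv, h2⟩ | ⟨v, hv, v', hv', h3⟩ | ⟨v, hv, k, h4⟩
    · exact Or.inl h1
    · obtain ⟨j, hj1, hj2⟩ := key i v hv
      exact Or.inr (Or.inl ⟨j, hj1, by rw [h2, hj2]⟩)
    · obtain ⟨j, hj1, hj2⟩ := key i v hv
      obtain ⟨j', hj1', hj2'⟩ := key i v' hv'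
      rcases h3 with h | h | h | h
      · exact Or.inr (Or.inr (Or.inl ⟨j, j', hj1, hj1', by rw [h, hj2, hj2']⟩))
      · exact Or.inr (Or.inr (Or.inr (Or.inl ⟨j, j', hj1, hj1', by rw [h, hj2, hj2']⟩)))
      · exact Or.inr (Or.inr (Or.inr (Or.inr (Or.inl ⟨j, j', hj1, hj1', by rw [h, hj2, hj2']⟩))))
      · exact Or.inr (Or.inr (Or.inr (Or.inr (Or.inr (Or.inl ⟨j, j', hj1, hj1', by rw [h, hj2, hj2']⟩)))))
    · obtain ⟨j, hj1, hj2⟩ := key i v hv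
      rcases h4 with h | h
      · exact Or.inr (Or.inr (Or.inr (Or.inr (Or.inr (Or.inr (Or.inl ⟨j, k, hj1, by rw [h, hj2]⟩))))))
      · exact Or.inr (Or.inr (Or.inr (Or.inr (Or.inr (Or.inr (Or.inr ⟨j, k, hj1, by rw [h, hj2]⟩))))))
  · rw [hsval]
    simp [hL]

theorem IsZF'.mem_self {u : ZWord} : u ∈ ([u] : List ZWord) := List.mem_singleton.2 rfl

theorem goodL_nil : GoodL [] := fun i h => by simp at h

theorem IsZF'.atom {u : ZWord} (h : IsAtomicZF u) : IsZF' u :=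
  ⟨[], by simpa using goodL_nil.concat (Or.inl h)⟩

theorem mem_concat_self (l : List ZWord) (u : ZWord) : u ∈ l ++ [u] := by simp

theorem IsZF'.neg {u : ZWord} (h : IsZF' u) : IsZF' (negW u) := by
  obtain ⟨l, hl⟩ := h
  exact ⟨l ++ [u], hl.concat (Or.inr (Or.inl ⟨u, mem_concat_self l u, rfl⟩))⟩

theorem IsZF'.binary {u v : ZWord} (h : IsZF' u) (h' : IsZF' v)
    {w : ZWord} (hw : w = impW u v ∨ w = iffW u v ∨ w = andW u v ∨ w = orW u v) :
    IsZF' w := by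
  obtain ⟨l, hl⟩ := h
  obtain ⟨l', hl'⟩ := h'
  refine ⟨(l ++ [u]) ++ (l' ++ [v]), (hl.append hl').concat ?_⟩
  exact Or.inr (Or.inr (Or.inl ⟨u, by simp, v, by simp, hw⟩))

theorem IsZF'.quant {u : ZWord} (h : IsZF' u) {k : ℕ} {w : ZWord}
    (hw : w = exW k u ∨ w = allW k u) : IsZF' w := by
  obtain ⟨l, hl⟩ := h
  exact ⟨l ++ [u], hl.concat (Or.inr (Or.inr (Or.inr ⟨u, mem_concat_self l u, k, hw⟩)))⟩

theorem Fm.isZF' : ∀ ψ : Fm, IsZF' ψ.toW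
  | .mem i j => IsZF'.atom ⟨i, j, Or.inl rfl⟩
  | .eq i j => IsZF'.atom ⟨i, j, Or.inr rfl⟩
  | .neg v => v.isZF'.neg
  | .imp v w => v.isZF'.binary w.isZF' (Or.inl rfl)
  | .iff v w => v.isZF'.binary w.isZF' (Or.inr (Or.inl rfl))
  | .and v w => v.isZF'.binary w.isZF' (Or.inr (Or.inr (Or.inl rfl)))
  | .or v w => v.isZF'.binary w.isZF' (Or.inr (Or.inr (Or.inr rfl)))
  | .ex k v => v.isZF'.quant (Or.inl rfl)
  | .all k v => v.isZF'.quant (Or.inr rfl)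

theorem Fm.isZF (ψ : Fm) : IsZF ψ.toW := ψ.isZF'.isZF

end CantorAux
namespace CantorAux

/-! ### Adequacy bridge -/

theorem adequate_ev {V : Type*} {E : V → V → Prop} {S : ZWord → (ℕ → V) → Prop}
    (hS : Adequate E S) : ∀ (ψ : Fm) (f : ℕ → V), S ψ.toW f ↔ ψ.Ev E f := by
  obtain ⟨hmem, heq, hneg, himp, hiff, hand, hor, hex, hall⟩ := hS
  intro ψ
  induction ψ with
  | mem i j => exact hmem i j
  | eq i j => exact heq i j
  | neg v ihv =>
      intro f
      rw [Fm.toW, hneg _ v.isZF]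
      exact not_congr (ihv f)
  | imp v w ihv ihw =>
      intro f
      rw [Fm.toW, himp _ _ v.isZF w.isZF]
      exact imp_congr (ihv f) (ihw f)
  | iff v w ihv ihw =>
      intro f
      rw [Fm.toW, hiff _ _ v.isZF w.isZF]
      exact iff_congr (ihv f) (ihw f)
  | and v w ihv ihw =>
      intro f
      rw [Fm.toW, hand _ _ v.isZF w.isZF]
      exact and_congr (ihv f) (ihw f)
  | or v w ihv ihw =>
      intro f
      rw [Fm.toW, hor _ _ v.isZF w.isZF]
      exact or_congr (ihv f) (ihw f)
  | ex k v ihv =>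
      intro f
      rw [Fm.toW, hex _ k v.isZF]
      exact exists_congr fun a => ihv _
  | all k v ihv =>
      intro f
      rw [Fm.toW, hall _ k v.isZF]
      exact forall_congr' fun a => ihv _

/-! ### Free variables and bound occurrences -/

/-- Free variables of a formula (as a list, possibly with duplicates). -/
def Fm.fv : Fm → List ℕ
  | .mem i j => [i, j]
  | .eq i j => [i, j]
  | .neg v => v.fv
  | .imp v w => v.fv ++ w.fv
  | .iff v w => v.fv ++ w.fv
  | .and v w => v.fv ++ w.fv
  | .or v w => v.fv ++ w.fv
  | .ex k v => v.fv.filter (fun j => j ≠ k)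
  | .all k v => v.fv.filter (fun j => j ≠ k)

/-- Strengthened bound-occurrence predicate. -/
def BoundIn (u : ZWord) (p i : ℕ) : Prop :=
  ∃ a b : ℕ, a ≤ p ∧ p < a + b ∧ a + b ≤ u.length ∧
    ∃ v : ZWord, IsZF v ∧
      ((u.drop a).take b = exW i v ∨ (u.drop a).take b = allW i v)

theorem BoundIn.boundOcc {u : ZWord} {p i : ℕ} (h : BoundIn u p i) : BoundOcc u p i := by
  obtain ⟨a, b, h1, h2, _, v, hv, h3⟩ := h
  exact ⟨a, b, h1, h2, v, hv, h3⟩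

theorem BoundIn.shift {v : ZWord} {p i : ℕ} (h : BoundIn v p i) (x y : ZWord) :
    BoundIn (x ++ v ++ y) (x.length + p) i := by
  obtain ⟨a, b, h1, h2, h3, w, hw, h4⟩ := h
  refine ⟨x.length + a, b, by omega, by omega, by simp; omega, w, hw, ?_⟩
  have hd : (x ++ v ++ y).drop (x.length + a) = v.drop a ++ y := by
    rw [List.append_assoc, List.drop_length_add_append, List.drop_append_of_le_length (by omega)]
  rw [hd, List.take_append_of_le_length (by simp; omega)]
  exact h4

theorem getElem?_append_cases {α : Type*} {x y : List α} {p : ℕ} {s : α}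
    (h : (x ++ y)[p]? = some s) :
    (p < x.length ∧ x[p]? = some s) ∨ (∃ q, p = x.length + q ∧ y[q]? = some s) := by
  rcases lt_or_ge p x.length with hp | hp
  · rw [List.getElem?_append_left hp] at h
    exact Or.inl ⟨hp, h⟩
  · rw [List.getElem?_append_right hp] at h
    exact Or.inr ⟨p - x.length, by omega, h⟩

end CantorAux
namespace CantorAux

theorem boundIn_self {v : Fm} {k : ℕ} {u : ZWord}
    (hu : u = exW k v.toW ∨ u = allW k v.toW) {p : ℕ} (hp : p < u.length) :
    BoundIn u p k :=
  ⟨0, u.length, Nat.zero_le _, by omega, by omega, v.toW, v.isZF, by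
    simpa using hu⟩

theorem bound_quant {v : Fm} {k : ℕ}
    (ih : ∀ p i, v.toW[p]? = some (ZSym.var i) → i ∈ v.fv ∨ BoundIn v.toW p i)
    {u : ZWord} (hu : u = exW k v.toW ∨ u = allW k v.toW) :
    ∀ p i, u[p]? = some (ZSym.var i) →
      i ∈ v.fv.filter (fun j => j ≠ k) ∨ BoundIn u p i := by
  intro p i hp
  have hulen : u.length = v.toW.length + 4 := by
    rcases hu with h | h <;> subst h <;> simp [exW, allW]
  have hshape : ∃ s : ZSym, (∀ j : ℕ, s ≠ ZSym.var j) ∧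
      u = [ZSym.lp, s, ZSym.var k] ++ (v.toW ++ [ZSym.rp]) := by
    rcases hu with h | h <;> subst h
    · exact ⟨ZSym.ex, fun j h => ZSym.noConfusion h, by simp [exW]⟩
    · exact ⟨ZSym.all, fun j h => ZSym.noConfusion h, by simp [allW]⟩
  obtain ⟨s, hs, hsh⟩ := hshape
  have h0 := hp
  rw [hsh] at h0
  rcases getElem?_append_cases h0 with ⟨hlt, hL⟩ | ⟨q, hq, hR⟩
  · simp only [List.length_cons, List.length_nil] at hlt
    interval_cases p
    · simp at hL
    · simp only [List.getElem?_cons_succ, List.getElem?_cons_zero, Option.some.injEq] at hL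
      exact absurd hL (hs i)
    · simp only [List.getElem?_cons_succ, List.getElem?_cons_zero, Option.some.injEq,
        ZSym.var.injEq] at hL
      subst hL
      exact Or.inr (boundIn_self hu (by omega))
  · simp only [List.length_cons, List.length_nil] at hq
    rcases getElem?_append_cases hR with ⟨hq2, hV⟩ | ⟨q', hq', hRp⟩
    · rcases ih q i hV with hfree | hb
      · by_cases hik : i = k
        · subst hik
          exact Or.inr (boundIn_self hu (by omega))
        · exact Or.inl (List.mem_filter.2 ⟨hfree, by simp [hik]⟩)
      · have h' := hb.shift [ZSym.lp, s, ZSym.var k] [ZSym.rp]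
        simp only [List.length_cons, List.length_nil] at h'
        have hw : [ZSym.lp, s, ZSym.var k] ++ v.toW ++ [ZSym.rp] = u := by
          rw [hsh, List.append_assoc]
        rw [hw, show 2 + 1 + q = p from by omega] at h'
        exact Or.inr h'
    · rcases q' with _ | q' <;> simp at hRp

theorem bound_binary {v w : Fm} {m : ZSym} (hm : ∀ j : ℕ, m ≠ ZSym.var j)
    (ihv : ∀ p i, v.toW[p]? = some (ZSym.var i) → i ∈ v.fv ∨ BoundIn v.toW p i)
    (ihw : ∀ p i, w.toW[p]? = some (ZSym.var i) → i ∈ w.fv ∨ BoundIn w.toW p i) :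
    ∀ p i, ([ZSym.lp] ++ v.toW ++ [m] ++ w.toW ++ [ZSym.rp])[p]? = some (ZSym.var i) →
      i ∈ v.fv ++ w.fv ∨ BoundIn ([ZSym.lp] ++ v.toW ++ [m] ++ w.toW ++ [ZSym.rp]) p i := by
  intro p i hp
  set u : ZWord := [ZSym.lp] ++ v.toW ++ [m] ++ w.toW ++ [ZSym.rp] with hu
  have h0 := hp
  have hsh : u = [ZSym.lp] ++ (v.toW ++ ([m] ++ (w.toW ++ [ZSym.rp]))) := by
    simp [hu, List.append_assoc]
  rw [hsh] at h0
  rcases getElem?_append_cases h0 with ⟨hlt, hL⟩ | ⟨q, hq, hR⟩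
  · simp only [List.length_cons, List.length_nil] at hlt
    interval_cases p
    simp at hL
  · simp only [List.length_cons, List.length_nil] at hq
    rcases getElem?_append_cases hR with ⟨hq2, hV⟩ | ⟨q2, hq2, hR2⟩
    · rcases ihv q i hV with hfree | hb
      · exact Or.inl (List.mem_append.2 (Or.inl hfree))
      · have h' := hb.shift [ZSym.lp] ([m] ++ (w.toW ++ [ZSym.rp]))
        simp only [List.length_cons, List.length_nil] at h'
        have hword : [ZSym.lp] ++ v.toW ++ ([m] ++ (w.toW ++ [ZSym.rp])) = u := by
          simp [hu, List.append_assoc]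
        rw [hword, show 1 + q = p from by omega] at h'
        exact Or.inr h'
    · rcases getElem?_append_cases hR2 with ⟨hlt3, hL3⟩ | ⟨q3, hq3, hR3⟩
      · simp only [List.length_cons, List.length_nil] at hlt3
        interval_cases q2
        simp only [List.getElem?_cons_zero, Option.some.injEq] at hL3
        exact absurd hL3 (hm i)
      · simp only [List.length_cons, List.length_nil] at hq3
        rcases getElem?_append_cases hR3 with ⟨hq4, hW⟩ | ⟨q4, hq4, hR4⟩
        · rcases ihw q3 i hW with hfree | hb
          · exact Or.inl (List.mem_append.2 (Or.inr hfree))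
          · have h' := hb.shift ([ZSym.lp] ++ v.toW ++ [m]) [ZSym.rp]
            have hword : ([ZSym.lp] ++ v.toW ++ [m]) ++ w.toW ++ [ZSym.rp] = u := by
              simp [hu, List.append_assoc]
            have hlen : ([ZSym.lp] ++ v.toW ++ [m]).length = v.toW.length + 2 := by
              simp
            rw [hword, hlen, show v.toW.length + 2 + q3 = p from by omega] at h'
            exact Or.inr h'
        · rcases q4 with _ | q4 <;> simp at hR4

theorem Fm.bound : ∀ (ψ : Fm) (p i : ℕ),
    (ψ.toW)[p]? = some (ZSym.var i) → i ∈ ψ.fv ∨ BoundIn ψ.toW p i := by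
  intro ψ
  induction ψ with
  | mem i j =>
      intro p i' hp
      rcases p with _ | _ | _ | _ | _ | p <;>
        simp_all [Fm.toW, Fm.fv, memAtom]
  | eq i j =>
      intro p i' hp
      rcases p with _ | _ | _ | _ | _ | p <;>
        simp_all [Fm.toW, Fm.fv, eqAtom]
  | neg v ihv =>
      intro p i hp
      rcases p with _ | p
      · simp [Fm.toW, negW] at hp
      · rw [show (v.neg).toW = negW v.toW from rfl, negW, List.getElem?_cons_succ] at hp
        rcases ihv p i hp with hfree | hb
        · exact Or.inl hfree
        · have h' := hb.shift [ZSym.neg] []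
          simp only [List.length_cons, List.length_nil, List.append_nil] at h'
          rw [show 0 + 1 + p = p + 1 from by omega] at h'
          exact Or.inr h'
  | imp v w ihv ihw => exact bound_binary (fun j h => ZSym.noConfusion h) ihv ihw
  | iff v w ihv ihw => exact bound_binary (fun j h => ZSym.noConfusion h) ihv ihw
  | and v w ihv ihw => exact bound_binary (fun j h => ZSym.noConfusion h) ihv ihw
  | or v w ihv ihw => exact bound_binary (fun j h => ZSym.noConfusion h) ihv ihw
  | ex k v ihv => exact bound_quant ihv (Or.inl rfl)
  | all k v ihv => exact bound_quant ihv (Or.inr rfl)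

/-- A formula with no free variables has a sentence word. -/
theorem Fm.sentence {ψ : Fm} (h : ψ.fv = []) : IsSentenceZF ψ.toW := by
  refine ⟨ψ.isZF, fun p i hp => ?_⟩
  rcases ψ.bound p i hp with hfree | hb
  · rw [h] at hfree
    simp at hfree
  · exact hb.boundOcc

end CantorAux
namespace CantorAux

/-! ### The concrete formula -/

/-- `N(x_w) = {x_v}`, via fresh variable `x_t`. -/
def eq1F (t w v : ℕ) : Fm := .all t (.iff (.mem t w) (.eq t v))
/-- `N(x_u) = {x_v, x_w}`, via fresh variable `x_t`. -/
def eq2F (t u v w : ℕ) : Fm := .all t (.iff (.mem t u) (.or (.eq t v) (.eq t w)))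
/-- `SIN(x_d; x_v)`, via fresh variables `x_s, x_t`. -/
def sinF (s t d v : ℕ) : Fm := .all s (.iff (eq1F t s v) (.eq s d))
/-- `DOU(x_e; x_v; x_w)`, via fresh variables `x_s, x_t`. -/
def douF (s t e v w : ℕ) : Fm := .all s (.iff (eq2F t s v w) (.eq s e))
/-- `OPA(x_p; x_a; x_b)`, via fresh variables `x_7, x_8, x_9, x_10`. -/
def opaF (p a b : ℕ) : Fm :=
  .ex 7 (.ex 8 (.and (sinF 9 10 7 a) (.and (douF 9 10 8 a b) (douF 9 10 p 7 8))))
/-- `N(x_a) ⊆ N(x_b)`, via fresh variable `x_t`. -/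
def subF (t a b : ℕ) : Fm := .all t (.imp (.mem t a) (.mem t b))

/-- `REL(x_2; x_1)`. -/
def relF : Fm :=
  .all 3 (.imp (.mem 3 2)
    (.ex 4 (.and (.mem 4 1) (.ex 5 (.and (subF 6 5 1) (opaF 3 4 5))))))
/-- the functionality clause of `FUN(x_2; x_1)`. -/
def funF : Fm :=
  .all 3 (.imp (.mem 3 1)
    (.ex 4 (.all 5 (.iff (.and (.mem 5 2) (.ex 6 (opaF 5 3 6))) (.eq 5 4)))))
/-- the surjectivity clause of `SUR(x_2; x_1)`. -/
def surF : Fm :=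
  .all 3 (.imp (subF 6 3 1) (.ex 4 (.and (.mem 4 2) (.ex 5 (opaF 4 5 3)))))
/-- `SUR(x_2; x_1)`. -/
def psiF : Fm := .and relF (.and funF surF)
/-- The Cantor sentence. -/
def phiF : Fm := .all 1 (.all 2 (.neg psiF))

end CantorAux
namespace CantorAux

variable {V : Type*} {E : V → V → Prop}

theorem unique_iff (P : V → Prop) (d : V) :
    (∀ a, P a ↔ a = d) ↔ (P d ∧ ∀ x, P x → x = d) := by
  constructor
  · intro h
    exact ⟨(h d).2 rfl, fun x hx => (h x).1 hx⟩
  · rintro ⟨h1, h2⟩ a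
    exact ⟨fun ha => h2 a ha, fun ha => ha ▸ h1⟩

theorem exu_iff (P : V → Prop) : (∃ d, ∀ x, P x ↔ x = d) ↔ (∃! x, P x) := by
  constructor
  · rintro ⟨d, hd⟩
    exact ⟨d, (hd d).2 rfl, fun y hy => (hd y).1 hy⟩
  · rintro ⟨x, hx, hu⟩
    exact ⟨x, fun y => ⟨fun h => hu y h, fun h => h ▸ hx⟩⟩

theorem ev_eq1 {t w v : ℕ} (h1 : w ≠ t) (h2 : v ≠ t) (f : ℕ → V) :
    (eq1F t w v).Ev E f ↔ inNbrs E (f w) = {f v} := by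
  rw [Set.ext_iff]
  simp only [eq1F, Fm.Ev, Function.update_self, Function.update_of_ne h1,
    Function.update_of_ne h2, inNbrs, Set.mem_setOf_eq, Set.mem_singleton_iff]

theorem ev_eq2 {t u v w : ℕ} (h1 : u ≠ t) (h2 : v ≠ t) (h3 : w ≠ t) (f : ℕ → V) :
    (eq2F t u v w).Ev E f ↔ inNbrs E (f u) = {f v, f w} := by
  rw [Set.ext_iff]
  simp only [eq2F, Fm.Ev, Function.update_self, Function.update_of_ne h1,
    Function.update_of_ne h2, Function.update_of_ne h3, inNbrs, Set.mem_setOf_eq,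
    Set.mem_insert_iff, Set.mem_singleton_iff]

section EvalLemmas

attribute [local irreducible] eq1F eq2F

theorem ev_sin {s t d v : ℕ} (hst : s ≠ t) (hvt : v ≠ t) (hvs : v ≠ s) (hds : d ≠ s)
    (f : ℕ → V) : (sinF s t d v).Ev E f ↔ SIN E (f d) (f v) := by
  simp only [sinF, Fm.Ev]
  have h : ∀ a : V,
      ((eq1F t s v).Ev E (Function.update f s a) ↔
        Function.update f s a s = Function.update f s a d) ↔
      (inNbrs E a = {f v} ↔ a = f d) := by
    intro a
    rw [ev_eq1 hst hvt, Function.update_self, Function.update_of_ne hds,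
      Function.update_of_ne hvs]
  rw [forall_congr' h]
  exact unique_iff _ _

theorem ev_dou {s t e v w : ℕ} (hst : s ≠ t) (hvt : v ≠ t) (hwt : w ≠ t)
    (hvs : v ≠ s) (hws : w ≠ s) (hes : e ≠ s) (f : ℕ → V) :
    (douF s t e v w).Ev E f ↔ DOU E (f e) (f v) (f w) := by
  simp only [douF, Fm.Ev]
  have h : ∀ a : V,
      ((eq2F t s v w).Ev E (Function.update f s a) ↔
        Function.update f s a s = Function.update f s a e) ↔
      (inNbrs E a = {f v, f w} ↔ a = f e) := by
    intro a
    rw [ev_eq2 hst hvt hwt, Function.update_self, Function.update_of_ne hes,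
      Function.update_of_ne hvs, Function.update_of_ne hws]
  rw [forall_congr' h]
  exact unique_iff _ _

attribute [local irreducible] sinF douF

theorem ev_opa {p a b : ℕ} (hp : p < 7) (ha : a < 7) (hb : b < 7) (f : ℕ → V) :
    (opaF p a b).Ev E f ↔ OPA E (f p) (f a) (f b) := by
  simp only [opaF, Fm.Ev]
  apply exists_congr
  intro d
  apply exists_congr
  intro e
  rw [ev_sin (by decide) (by omega) (by omega) (by decide),
    ev_dou (by decide) (by omega) (by omega) (by omega) (by omega) (by decide),
    ev_dou (by decide) (by decide) (by decide) (by decide) (by decide) (by omega)]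
  rw [Function.update_of_ne (show (7:ℕ) ≠ 8 by decide), Function.update_self,
    Function.update_self, Function.update_of_ne (show a ≠ 8 by omega),
    Function.update_of_ne (show a ≠ 7 by omega),
    Function.update_of_ne (show b ≠ 8 by omega),
    Function.update_of_ne (show b ≠ 7 by omega),
    Function.update_of_ne (show p ≠ 8 by omega),
    Function.update_of_ne (show p ≠ 7 by omega)]

theorem ev_sub {t a b : ℕ} (hat : a ≠ t) (hbt : b ≠ t) (f : ℕ → V) :
    (subF t a b).Ev E f ↔ inNbrs E (f a) ⊆ inNbrs E (f b) := by
  rw [Set.subset_def]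
  simp only [subF, Fm.Ev, Function.update_self, Function.update_of_ne hat,
    Function.update_of_ne hbt, inNbrs, Set.mem_setOf_eq]

attribute [local irreducible] subF opaF

theorem ev_rel (f : ℕ → V) : relF.Ev E f ↔ REL E (f 2) (f 1) := by
  simp only [relF, Fm.Ev, ev_sub (show (5:ℕ) ≠ 6 by decide) (show (1:ℕ) ≠ 6 by decide),
    ev_opa (show (3:ℕ) < 7 by decide) (show (4:ℕ) < 7 by decide) (show (5:ℕ) < 7 by decide)]
  simp only [Function.update_self,
    Function.update_of_ne (show (2:ℕ) ≠ 3 by decide),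
    Function.update_of_ne (show (1:ℕ) ≠ 3 by decide),
    Function.update_of_ne (show (1:ℕ) ≠ 4 by decide),
    Function.update_of_ne (show (1:ℕ) ≠ 5 by decide),
    Function.update_of_ne (show (3:ℕ) ≠ 4 by decide),
    Function.update_of_ne (show (3:ℕ) ≠ 5 by decide),
    Function.update_of_ne (show (4:ℕ) ≠ 5 by decide)]
  simp only [REL, inNbrs, Set.mem_setOf_eq]

theorem ev_fun (f : ℕ → V) :
    funF.Ev E f ↔
      ∀ w ∈ inNbrs E (f 1), ∃! q, q ∈ inNbrs E (f 2) ∧ ∃ w', OPA E q w w' := by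
  simp only [funF, Fm.Ev,
    ev_opa (show (5:ℕ) < 7 by decide) (show (3:ℕ) < 7 by decide) (show (6:ℕ) < 7 by decide)]
  simp only [Function.update_self,
    Function.update_of_ne (show (1:ℕ) ≠ 3 by decide),
    Function.update_of_ne (show (2:ℕ) ≠ 3 by decide),
    Function.update_of_ne (show (2:ℕ) ≠ 4 by decide),
    Function.update_of_ne (show (2:ℕ) ≠ 5 by decide),
    Function.update_of_ne (show (2:ℕ) ≠ 6 by decide),
    Function.update_of_ne (show (3:ℕ) ≠ 4 by decide),
    Function.update_of_ne (show (3:ℕ) ≠ 5 by decide),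
    Function.update_of_ne (show (3:ℕ) ≠ 6 by decide),
    Function.update_of_ne (show (5:ℕ) ≠ 6 by decide),
    Function.update_of_ne (show (4:ℕ) ≠ 5 by decide)]
  simp only [inNbrs, Set.mem_setOf_eq]
  apply forall_congr'
  intro c
  apply imp_congr Iff.rfl
  exact exu_iff _

theorem ev_sur (f : ℕ → V) :
    surF.Ev E f ↔
      ∀ w', inNbrs E w' ⊆ inNbrs E (f 1) →
        ∃ q ∈ inNbrs E (f 2), ∃ w, OPA E q w w' := by
  simp only [surF, Fm.Ev, ev_sub (show (3:ℕ) ≠ 6 by decide) (show (1:ℕ) ≠ 6 by decide),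
    ev_opa (show (4:ℕ) < 7 by decide) (show (5:ℕ) < 7 by decide) (show (3:ℕ) < 7 by decide)]
  simp only [Function.update_self,
    Function.update_of_ne (show (1:ℕ) ≠ 3 by decide),
    Function.update_of_ne (show (2:ℕ) ≠ 3 by decide),
    Function.update_of_ne (show (2:ℕ) ≠ 4 by decide),
    Function.update_of_ne (show (3:ℕ) ≠ 4 by decide),
    Function.update_of_ne (show (3:ℕ) ≠ 5 by decide),
    Function.update_of_ne (show (4:ℕ) ≠ 5 by decide)]
  simp only [inNbrs, Set.mem_setOf_eq]

attribute [local irreducible] relF funF surF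

theorem ev_psi (f : ℕ → V) : psiF.Ev E f ↔ SUR E (f 2) (f 1) := by
  simp only [psiF, Fm.Ev, ev_rel, ev_fun, ev_sur, SUR, FUN]
  tauto

attribute [local irreducible] psiF

theorem ev_phi (f : ℕ → V) : phiF.Ev E f ↔ ∀ u v : V, ¬ SUR E v u := by
  simp only [phiF, Fm.Ev]
  apply forall_congr'
  intro u
  apply forall_congr'
  intro v
  apply not_congr
  rw [ev_psi, Function.update_self,
    Function.update_of_ne (show (1:ℕ) ≠ 2 by decide), Function.update_self]

end EvalLemmas

end CantorAux
set_option maxRecDepth 40000 in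
/-- There is a ZF sentence `φ` over the alphabet `𝒜` of length
`494` containing exactly one occurrence of `¬` such that for every digraph
`D = (V, E)`: `D ⊨ φ` iff `D` is Cantor, i.e. for no `u, v ∈ V` does `SUR(v; u)`
hold. (Satisfaction `D ⊨ φ` is expressed via any adequate satisfaction relation;
since `φ` is a sentence its truth does not depend on the realization `f`.) -/
theorem exists_cantor_zf_sentence :
    ∃ φ : ZWord,
      IsSentenceZF φ ∧ φ.length = 494 ∧ φ.count ZSym.neg = 1 ∧
      ∀ (V : Type) (E : V → V → Prop), Nonempty V →
        ∀ S : ZWord → (ℕ → V) → Prop, Adequate E S →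
          ((∀ f : ℕ → V, S φ f) ↔ ∀ u v : V, ¬ SUR E v u) := by
  refine ⟨CantorAux.phiF.toW, CantorAux.Fm.sentence (by decide), by decide, by decide, ?_⟩
  intro V E hne S hS
  obtain ⟨v0⟩ := hne
  constructor
  · intro h u v
    have h2 := (CantorAux.adequate_ev hS CantorAux.phiF (fun _ => v0)).1 (h _)
    rw [CantorAux.ev_phi] at h2
    exact h2 u v
  · intro h f
    exact (CantorAux.adequate_ev hS CantorAux.phiF f).2 ((CantorAux.ev_phi f).2 h)
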